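/- Let 0 < w1 ≤ w2 be integers. The number of affine equivalence classes of four-point multisets in ℤ² with multi-width (w1, w2) is at most (w1²/4 + w1 + c)·(6·w2² + 1), where c = 1 if w1 is even and c = 3/4 if w1 is odd. -/

import Mathlib

open scoped Pointwise

noncomputable section

/-- Embed an integer lattice point into real space. -/
def intEmbed {d : ℕ} (v : Fin d → ℤ) : Fin d → ℝ := fun i => (v i : ℝ)

/-- Pairing of an integer dual vector with a real point. -/
def dualPair {d : ℕ} (u : Fin d → ℤ) (x : Fin d → ℝ) : ℝ := ∑ i, (u i : ℝ) * x i

/-- The width of a set `P ⊆ ℝ^d` with respect to an integer dual vector `u`: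
`max_{x ∈ P} u·x − min_{x ∈ P} u·x`. -/
def widthIn {d : ℕ} (u : Fin d → ℤ) (P : Set (Fin d → ℝ)) : ℝ :=
  sSup (dualPair u '' P) - sInf (dualPair u '' P)

/-- `w` is a tuple of widths of `P` realized by linearly independent dual vectors. -/
def IsWidthTuple {d : ℕ} (P : Set (Fin d → ℝ)) (w : Fin d → ℝ) : Prop :=
  ∃ u : Fin d → (Fin d → ℤ), LinearIndependent ℤ u ∧ ∀ i, widthIn (u i) P = w i

/-- `w` is the multi-width of `P`: the lexicographically minimal width tuple over
linearly independent tuples of dual vectors. -/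
def IsMultiWidth {d : ℕ} (P : Set (Fin d → ℝ)) (w : Fin d → ℝ) : Prop :=
  IsWidthTuple P w ∧ ∀ w' : Fin d → ℝ, IsWidthTuple P w' → toLex w ≤ toLex w'

/-- The affine map `x ↦ A x + b` on real points, with integral `A` and `b`. -/
def unimodMap {d : ℕ} (A : Matrix (Fin d) (Fin d) ℤ) (b : Fin d → ℤ) (x : Fin d → ℝ) :
    Fin d → ℝ :=
  fun i => (∑ j, (A i j : ℝ) * x j) + (b i : ℝ)

/-- Affine unimodular equivalence of subsets of `ℝ^d`: `Q = A·P + b` with `A ∈ GL_d(ℤ)`,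
`b ∈ ℤ^d`. -/
def AffEquiv {d : ℕ} (P Q : Set (Fin d → ℝ)) : Prop :=
  ∃ A : Matrix (Fin d) (Fin d) ℤ, IsUnit A.det ∧ ∃ b : Fin d → ℤ, Q = unimodMap A b '' P

/-- A lattice polytope: the convex hull of finitely many lattice points. -/
def IsLatticePolytope {d : ℕ} (P : Set (Fin d → ℝ)) : Prop :=
  ∃ V : Finset (Fin d → ℤ), V.Nonempty ∧ P = convexHull ℝ (intEmbed '' (V : Set (Fin d → ℤ)))

/-- A lattice tetrahedron: the convex hull of 4 affinely independent lattice points in `ℝ³`. -/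
def IsLatticeTetrahedron (P : Set (Fin 3 → ℝ)) : Prop :=
  ∃ v : Fin 4 → (Fin 3 → ℤ), AffineIndependent ℝ (fun i => intEmbed (v i)) ∧
    P = convexHull ℝ (Set.range fun i => intEmbed (v i))

/-- The type of affine equivalence classes of lattice tetrahedra with multi-width `w`. -/
def TetClasses (w : Fin 3 → ℝ) : Type :=
  Quot fun P Q : {P : Set (Fin 3 → ℝ) // IsLatticeTetrahedron P ∧ IsMultiWidth P w} =>
    AffEquiv P.1 Q.1

/-- The real points of a multiset of lattice points. -/
def msetPts {d : ℕ} (S : Multiset (Fin d → ℤ)) : Set (Fin d → ℝ) :=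
  intEmbed '' {v | v ∈ S}

/-- The convex hull of a multiset of lattice points. -/
def msetHull {d : ℕ} (S : Multiset (Fin d → ℤ)) : Set (Fin d → ℝ) :=
  convexHull ℝ (msetPts S)

/-- Affine unimodular equivalence of multisets of lattice points. -/
def MsetEquiv {d : ℕ} (S T : Multiset (Fin d → ℤ)) : Prop :=
  ∃ A : Matrix (Fin d) (Fin d) ℤ, IsUnit A.det ∧ ∃ b : Fin d → ℤ,
    S.map (fun v => A.mulVec v + b) = T

/-- Affine unimodular equivalence of multisets of integers (`d = 1`). -/
def MsetEquivZ (S T : Multiset ℤ) : Prop :=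
  ∃ a : ℤ, IsUnit a ∧ ∃ b : ℤ, S.map (fun x => a * x + b) = T

/-- The width of a multiset of integers (the width of its convex hull). -/
def widthZ (S : Multiset ℤ) : ℝ :=
  sSup ((fun n : ℤ => (n : ℝ)) '' {n | n ∈ S}) - sInf ((fun n : ℤ => (n : ℝ)) '' {n | n ∈ S})

/-- `S` has a dual vector `u` of width `w1` whose image multiset `u·S` is affine
equivalent in `ℤ` to the multiset `L`. -/
def HasLineType (w1 : ℤ) (L : Multiset ℤ) (S : Multiset (Fin 2 → ℤ)) : Prop :=
  ∃ u : Fin 2 → ℤ, widthIn u (msetHull S) = (w1 : ℝ) ∧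
    MsetEquivZ (S.map fun v => ∑ i, u i * v i) L

namespace FourPt

abbrev V := Fin 2 → ℤ

/-- integer pairing -/
def ev (u v : V) : ℤ := ∑ i, u i * v i

lemma ev_def (u v : V) : ev u v = u 0 * v 0 + u 1 * v 1 := by
  simp [ev, Fin.sum_univ_two]

/-- max of a nonempty multiset of integers -/
def mxZ (T : Multiset ℤ) : ℤ := WithBot.unbotD 0 T.toFinset.max
def mnZ (T : Multiset ℤ) : ℤ := WithTop.untopD 0 T.toFinset.min

lemma mxZ_mem {T : Multiset ℤ} (h : T ≠ 0) : mxZ T ∈ T := by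
  have hne : T.toFinset.Nonempty := Multiset.toFinset_nonempty.mpr h
  have := Finset.coe_max' hne
  rw [mxZ, ← this]
  simpa using Multiset.mem_toFinset.mp (Finset.max'_mem _ hne)

lemma le_mxZ {T : Multiset ℤ} {a : ℤ} (ha : a ∈ T) : a ≤ mxZ T := by
  have h : T ≠ 0 := by rintro rfl; simp at ha
  have hne : T.toFinset.Nonempty := Multiset.toFinset_nonempty.mpr h
  have := Finset.coe_max' hne
  rw [mxZ, ← this]
  simpa using Finset.le_max' _ a (Multiset.mem_toFinset.mpr ha)

lemma mnZ_mem {T : Multiset ℤ} (h : T ≠ 0) : mnZ T ∈ T := by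
  have hne : T.toFinset.Nonempty := Multiset.toFinset_nonempty.mpr h
  have := Finset.coe_min' hne
  rw [mnZ, ← this]
  simpa using Multiset.mem_toFinset.mp (Finset.min'_mem _ hne)

lemma mnZ_le {T : Multiset ℤ} {a : ℤ} (ha : a ∈ T) : mnZ T ≤ a := by
  have h : T ≠ 0 := by rintro rfl; simp at ha
  have hne : T.toFinset.Nonempty := Multiset.toFinset_nonempty.mpr h
  have := Finset.coe_min' hne
  rw [mnZ, ← this]
  simpa using Finset.min'_le _ a (Multiset.mem_toFinset.mpr ha)

/-- the max/min of `u`-values on a multiset, and the width -/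
def mx (u : V) (S : Multiset V) : ℤ := mxZ (S.map (ev u))
def mn (u : V) (S : Multiset V) : ℤ := mnZ (S.map (ev u))
def wd (u : V) (S : Multiset V) : ℤ := mx u S - mn u S

lemma exists_mx {u : V} {S : Multiset V} (h : S ≠ 0) : ∃ v ∈ S, ev u v = mx u S := by
  have h' : S.map (ev u) ≠ 0 := by simpa using h
  have := mxZ_mem h'
  rw [Multiset.mem_map] at this
  obtain ⟨v, hv, hev⟩ := this
  exact ⟨v, hv, hev⟩

lemma exists_mn {u : V} {S : Multiset V} (h : S ≠ 0) : ∃ v ∈ S, ev u v = mn u S := by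
  have h' : S.map (ev u) ≠ 0 := by simpa using h
  have := mnZ_mem h'
  rw [Multiset.mem_map] at this
  obtain ⟨v, hv, hev⟩ := this
  exact ⟨v, hv, hev⟩

lemma le_mx {u : V} {S : Multiset V} {v : V} (hv : v ∈ S) : ev u v ≤ mx u S :=
  le_mxZ (Multiset.mem_map_of_mem _ hv)

lemma mn_le {u : V} {S : Multiset V} {v : V} (hv : v ∈ S) : mn u S ≤ ev u v :=
  mnZ_le (Multiset.mem_map_of_mem _ hv)

lemma pair_le_wd {u : V} {S : Multiset V} {v v' : V} (hv : v ∈ S) (hv' : v' ∈ S) :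
    ev u v - ev u v' ≤ wd u S :=
  sub_le_sub (le_mx hv) (mn_le hv')

lemma exists_wd {u : V} {S : Multiset V} (h : S ≠ 0) :
    ∃ v ∈ S, ∃ v' ∈ S, ev u v - ev u v' = wd u S := by
  obtain ⟨v, hv, hev⟩ := exists_mx (u := u) h
  obtain ⟨v', hv', hev'⟩ := exists_mn (u := u) h
  exact ⟨v, hv, v', hv', by rw [hev, hev']; rfl⟩

lemma wd_nonneg {u : V} {S : Multiset V} (h : S ≠ 0) : 0 ≤ wd u S := by
  obtain ⟨v, hv⟩ := Multiset.exists_mem_of_ne_zero h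
  have h1 := le_mx (u := u) hv
  have h2 := mn_le (u := u) hv
  simp only [wd]; omega

lemma wd_le {u : V} {S : Multiset V} (h : S ≠ 0) {c : ℤ}
    (hc : ∀ v ∈ S, ∀ v' ∈ S, ev u v - ev u v' ≤ c) : wd u S ≤ c := by
  obtain ⟨v, hv, v', hv', hvv⟩ := exists_wd (u := u) h
  rw [← hvv]; exact hc v hv v' hv'


-- ### Part 2: transformation lemmas

lemma mxZ_map_add (T : Multiset ℤ) (c : ℤ) (h : T ≠ 0) :
    mxZ (T.map (· + c)) = mxZ T + c := by
  have h' : T.map (· + c) ≠ 0 := by simpa using h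
  apply le_antisymm
  · obtain ⟨a, ha⟩ := Multiset.mem_map.mp (mxZ_mem h')
    rw [← ha.2]
    exact add_le_add_left (le_mxZ ha.1) c
  · exact le_mxZ (Multiset.mem_map_of_mem _ (mxZ_mem h))

lemma mnZ_map_add (T : Multiset ℤ) (c : ℤ) (h : T ≠ 0) :
    mnZ (T.map (· + c)) = mnZ T + c := by
  have h' : T.map (· + c) ≠ 0 := by simpa using h
  apply le_antisymm
  · exact mnZ_le (Multiset.mem_map_of_mem _ (mnZ_mem h))
  · obtain ⟨a, ha⟩ := Multiset.mem_map.mp (mnZ_mem h')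
    rw [← ha.2]
    exact add_le_add_left (mnZ_le ha.1) c

lemma ev_affine (u v : V) (A : Matrix (Fin 2) (Fin 2) ℤ) (b : V) :
    ev u (A.mulVec v + b) = ev (Matrix.vecMul u A) v + ev u b := by
  simp [ev, Matrix.mulVec, Matrix.vecMul, dotProduct, Fin.sum_univ_two]
  ring

lemma wd_map_affine (u : V) (S : Multiset V) (A : Matrix (Fin 2) (Fin 2) ℤ) (b : V)
    (h : S ≠ 0) :
    wd u (S.map (fun v => A.mulVec v + b)) = wd (Matrix.vecMul u A) S := by
  have key : (S.map (fun v => A.mulVec v + b)).map (ev u)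
      = (S.map (ev (Matrix.vecMul u A))).map (· + ev u b) := by
    rw [Multiset.map_map, Multiset.map_map]
    exact Multiset.map_congr rfl fun v _ => ev_affine u v A b
  have hne : S.map (ev (Matrix.vecMul u A)) ≠ 0 := by simpa using h
  simp only [wd, mx, mn, key, mxZ_map_add _ _ hne, mnZ_map_add _ _ hne]
  ring

lemma ev_neg (u v : V) : ev (-u) v = -(ev u v) := by
  simp [ev, Fin.sum_univ_two, mul_add, add_mul, mul_comm, mul_left_comm]

lemma ev_smul (c : ℤ) (u v : V) : ev (c • u) v = c * ev u v := by
  simp [ev, Fin.sum_univ_two, mul_add, add_mul, mul_comm, mul_left_comm]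

lemma wd_neg (u : V) (S : Multiset V) (h : S ≠ 0) : wd (-u) S = wd u S := by
  obtain ⟨v, hv, v', hv', hvv⟩ := exists_wd (u := -u) h
  obtain ⟨w, hw, w', hw', hww⟩ := exists_wd (u := u) h
  apply le_antisymm
  · rw [← hvv]
    have := pair_le_wd (u := u) hv' hv
    simp only [ev_neg]; omega
  · rw [← hww]
    have := pair_le_wd (u := -u) hw' hw
    simp only [ev_neg] at this; omega

lemma wd_smul (c : ℤ) (hc : 0 ≤ c) (u : V) (S : Multiset V) (h : S ≠ 0) :
    wd (c • u) S = c * wd u S := by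
  obtain ⟨v, hv, v', hv', hvv⟩ := exists_wd (u := c • u) h
  obtain ⟨w, hw, w', hw', hww⟩ := exists_wd (u := u) h
  apply le_antisymm
  · rw [← hvv]
    have := pair_le_wd (u := u) hv hv'
    calc ev (c • u) v - ev (c • u) v' = c * (ev u v - ev u v') := by
          simp only [ev_smul]; ring
      _ ≤ c * wd u S := mul_le_mul_of_nonneg_left this hc
  · rw [← hww]
    have := pair_le_wd (u := c • u) hw hw'
    simp only [ev_smul] at this
    linarith

/-- 2x2 "determinant" of a pair of dual vectors -/
def dd (u v : V) : ℤ := u 0 * v 1 - u 1 * v 0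

lemma dd_vecMul (u v : V) (A : Matrix (Fin 2) (Fin 2) ℤ) :
    dd (Matrix.vecMul u A) (Matrix.vecMul v A) = dd u v * A.det := by
  simp [dd, Matrix.vecMul, dotProduct, Fin.sum_univ_two, Matrix.det_fin_two]
  ring

lemma li_of_dd {u v : V} (h : dd u v ≠ 0) : LinearIndependent ℤ ![u, v] := by
  rw [Fintype.linearIndependent_iff]
  intro g hg
  have h0 : g 0 * u 0 + g 1 * v 0 = 0 := by
    have := congrFun (by simpa [Fin.sum_univ_two] using hg : g 0 • u + g 1 • v = 0) 0
    simpa using this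
  have h1 : g 0 * u 1 + g 1 * v 1 = 0 := by
    have := congrFun (by simpa [Fin.sum_univ_two] using hg : g 0 • u + g 1 • v = 0) 1
    simpa using this
  have hg0 : g 0 * dd u v = 0 := by simp only [dd]; linear_combination v 1 * h0 - v 0 * h1
  have hg1 : g 1 * dd u v = 0 := by simp only [dd]; linear_combination u 0 * h1 - u 1 * h0
  intro i
  fin_cases i
  · exact (mul_eq_zero.mp hg0).resolve_right h
  · exact (mul_eq_zero.mp hg1).resolve_right h

lemma dd_of_li {u v : V} (h : LinearIndependent ℤ ![u, v]) : dd u v ≠ 0 := by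
  intro hdd
  rw [Fintype.linearIndependent_iff] at h
  by_cases hu0 : u 0 ≠ 0
  · have := h ![v 0, -(u 0)] (by
      funext i
      fin_cases i <;>
        simp [Fin.sum_univ_two, dd] at hdd ⊢ <;> linarith [hdd])
    have := this 1
    simp at this
    exact hu0 (by omega)
  · by_cases hu1 : u 1 ≠ 0
    · have := h ![v 1, -(u 1)] (by
        funext i
        fin_cases i <;>
          simp [Fin.sum_univ_two, dd] at hdd ⊢ <;> linarith [hdd])
      have := this 1
      simp at this
      exact hu1 (by omega)
    · push_neg at hu0 hu1
      have hu : u = 0 := by funext i; fin_cases i <;> simpa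
      have := h ![1, 0] (by
        funext i
        fin_cases i <;> simp [Fin.sum_univ_two, hu])
      have := this 0
      simp at this

-- ### Part 3: bridge from real widths to integer widths

lemma mxZ_eq_max' {T : Multiset ℤ} (h : T ≠ 0) :
    mxZ T = T.toFinset.max' (Multiset.toFinset_nonempty.mpr h) := by
  rw [mxZ, ← Finset.coe_max' (Multiset.toFinset_nonempty.mpr h)]
  rfl

lemma mnZ_eq_min' {T : Multiset ℤ} (h : T ≠ 0) :
    mnZ T = T.toFinset.min' (Multiset.toFinset_nonempty.mpr h) := by
  rw [mnZ, ← Finset.coe_min' (Multiset.toFinset_nonempty.mpr h)]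
  rfl

/-- `dualPair u` as a linear map. -/
def dpl (u : V) : (Fin 2 → ℝ) →ₗ[ℝ] ℝ where
  toFun := dualPair u
  map_add' x y := by simp [dualPair, mul_add, Finset.sum_add_distrib]
  map_smul' c x := by simp [dualPair, Finset.mul_sum, Fin.sum_univ_two]; ring

lemma sSup_convexHull_finset (F : Finset ℝ) (h : F.Nonempty) :
    sSup (convexHull ℝ (F : Set ℝ)) = F.max' h := by
  have hsub : convexHull ℝ (F : Set ℝ) ⊆ Set.Icc (F.min' h) (F.max' h) := by
    apply convexHull_min _ (convex_Icc _ _)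
    intro x hx
    exact ⟨F.min'_le x hx, F.le_max' x hx⟩
  apply le_antisymm
  · apply csSup_le (convexHull_nonempty_iff.mpr (by exact_mod_cast h))
    exact fun x hx => (hsub hx).2
  · exact le_csSup ⟨F.max' h, fun x hx => (hsub hx).2⟩
      (subset_convexHull ℝ _ (F.max'_mem h))

lemma sInf_convexHull_finset (F : Finset ℝ) (h : F.Nonempty) :
    sInf (convexHull ℝ (F : Set ℝ)) = F.min' h := by
  have hsub : convexHull ℝ (F : Set ℝ) ⊆ Set.Icc (F.min' h) (F.max' h) := by
    apply convexHull_min _ (convex_Icc _ _)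
    intro x hx
    exact ⟨F.min'_le x hx, F.le_max' x hx⟩
  apply le_antisymm
  · exact csInf_le ⟨F.min' h, fun x hx => (hsub hx).1⟩
      (subset_convexHull ℝ _ (F.min'_mem h))
  · apply le_csInf (convexHull_nonempty_iff.mpr (by exact_mod_cast h))
    exact fun x hx => (hsub hx).1

lemma dualPair_intEmbed (u v : V) : dualPair u (intEmbed v) = (ev u v : ℝ) := by
  simp [dualPair, intEmbed, ev]

lemma widthIn_eq_wd (u : V) (S : Multiset V) (h : S ≠ 0) :
    widthIn u (msetHull S) = (wd u S : ℝ) := by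
  classical
  set T : Multiset ℤ := S.map (ev u) with hT
  have hTne : T ≠ 0 := by simpa [hT] using h
  have hFne : T.toFinset.Nonempty := Multiset.toFinset_nonempty.mpr hTne
  set F : Finset ℝ := T.toFinset.image (fun n : ℤ => (n : ℝ)) with hF
  have hFne' : F.Nonempty := hFne.image _
  have himg : dualPair u '' msetHull S = convexHull ℝ (F : Set ℝ) := by
    have h1 : dualPair u '' msetHull S = convexHull ℝ (dualPair u '' msetPts S) := by
      have := AffineMap.image_convexHull ((dpl u).toAffineMap) (msetPts S)
      simpa [msetHull, show ⇑(dpl u) = dualPair u from rfl] using this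
    rw [h1]
    congr 1
    ext x
    constructor
    · rintro ⟨y, ⟨v, hv, rfl⟩, rfl⟩
      rw [dualPair_intEmbed]
      refine Finset.mem_coe.mpr (Finset.mem_image.mpr ⟨ev u v, ?_, rfl⟩)
      rw [Multiset.mem_toFinset, hT]
      exact Multiset.mem_map_of_mem _ hv
    · intro hx
      obtain ⟨n, hn, rfl⟩ := Finset.mem_image.mp (Finset.mem_coe.mp hx)
      rw [Multiset.mem_toFinset, hT, Multiset.mem_map] at hn
      obtain ⟨v, hv, rfl⟩ := hn
      exact ⟨intEmbed v, ⟨v, hv, rfl⟩, dualPair_intEmbed u v⟩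
  have hmax : F.max' hFne' = ((T.toFinset.max' hFne : ℤ) : ℝ) :=
    Finset.max'_image (fun a b hab => by exact_mod_cast hab) _ _
  have hmin : F.min' hFne' = ((T.toFinset.min' hFne : ℤ) : ℝ) :=
    Finset.min'_image (fun a b hab => by exact_mod_cast hab) _ _
  rw [widthIn, himg, sSup_convexHull_finset _ hFne', sInf_convexHull_finset _ hFne']
  simp only [hmax, hmin]
  rw [wd, mx, mn, mxZ_eq_max' hTne, mnZ_eq_min' hTne]
  push_cast
  rfl

-- ### lex order decoding on `Fin 2 → ℝ`

lemma lex_lt_def {a b : Fin 2 → ℝ} :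
    (toLex a < toLex b) ↔ ∃ i, (∀ j, j < i → a j = b j) ∧ a i < b i :=
  Iff.rfl

lemma toLex_le_iff2 {a b : Fin 2 → ℝ} :
    toLex a ≤ toLex b ↔ (a 0 < b 0 ∨ (a 0 = b 0 ∧ a 1 ≤ b 1)) := by
  constructor
  · intro h
    rcases lt_or_eq_of_le h with hlt | heq
    · obtain ⟨i, hj, hi⟩ := lex_lt_def.mp hlt
      fin_cases i
      · exact Or.inl hi
      · exact Or.inr ⟨hj 0 (by norm_num), le_of_lt hi⟩
    · have : a = b := toLex_inj.mp heq
      exact Or.inr ⟨congrFun this 0, le_of_eq (congrFun this 1)⟩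
  · rintro (h | ⟨h0, h1⟩)
    · exact le_of_lt (lex_lt_def.mpr ⟨0, fun j hj => absurd hj (by simp [Fin.lt_iff_val_lt_val]), h⟩)
    · rcases lt_or_eq_of_le h1 with hlt | heq
      · refine le_of_lt (lex_lt_def.mpr ⟨1, fun j hj => ?_, hlt⟩)
        have : j = 0 := by
          have := hj
          simp [Fin.lt_iff_val_lt_val] at this
          exact Fin.ext (by omega)
        rw [this]; exact h0
      · have : a = b := by
          funext i
          fin_cases i
          · exact h0
          · exact heq
        exact le_of_eq (congrArg toLex this)

-- ### the Good predicate

structure Good (w1 w2 : ℤ) (S : Multiset V) : Prop where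
  card4 : Multiset.card S = 4
  ex : ∃ u v : V, dd u v ≠ 0 ∧ wd u S = w1 ∧ wd v S = w2
  min1 : ∀ u : V, u ≠ 0 → w1 ≤ wd u S
  min2 : ∀ u v : V, dd u v ≠ 0 → wd u S = w1 → w2 ≤ wd v S

lemma ne_zero_of_card4 {S : Multiset V} (hc : Multiset.card S = 4) : S ≠ 0 := by
  intro h; rw [h] at hc; simp at hc

lemma good_of_multiwidth {w1 w2 : ℤ} {S : Multiset V} (hc : Multiset.card S = 4)
    (hmw : IsMultiWidth (msetHull S) ![(w1 : ℝ), (w2 : ℝ)]) : Good w1 w2 S := by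
  have hS : S ≠ 0 := ne_zero_of_card4 hc
  have key : ∀ u v : V, dd u v ≠ 0 →
      IsWidthTuple (msetHull S) ![(wd u S : ℝ), (wd v S : ℝ)] := by
    intro u v hdd
    refine ⟨![u, v], li_of_dd hdd, ?_⟩
    intro i
    fin_cases i <;> simp [widthIn_eq_wd _ _ hS]
  have decode : ∀ u v : V, dd u v ≠ 0 →
      ((w1 : ℝ) < wd u S ∨ ((w1 : ℝ) = (wd u S : ℝ) ∧ (w2 : ℝ) ≤ (wd v S : ℝ))) := by
    intro u v hdd
    have := hmw.2 _ (key u v hdd)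
    rw [toLex_le_iff2] at this
    simpa using this
  have hmin1 : ∀ u : V, u ≠ 0 → w1 ≤ wd u S := by
    intro u hu
    have hcomp : u 0 ≠ 0 ∨ u 1 ≠ 0 := by
      by_contra hcon
      push_neg at hcon
      exact hu (by funext i; fin_cases i <;> simp [hcon.1, hcon.2])
    set v : V := ![-(u 1), u 0] with hv
    have hdd : dd u v ≠ 0 := by
      simp only [dd, hv]
      simp only [Matrix.cons_val_one, Matrix.head_cons, Matrix.cons_val_zero]
      intro hcon
      rcases hcomp with h | h
      · nlinarith [mul_self_pos.mpr h, mul_self_nonneg (u 1)]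
      · nlinarith [mul_self_pos.mpr h, mul_self_nonneg (u 0)]
    rcases decode u v hdd with h | ⟨h, _⟩
    · exact_mod_cast le_of_lt h
    · exact le_of_eq (by exact_mod_cast h)
  refine ⟨hc, ?_, hmin1, ?_⟩
  · obtain ⟨U, hLI, hw⟩ := hmw.1
    have hU : ![U 0, U 1] = U := by
      funext i
      fin_cases i <;> rfl
    have hdd : dd (U 0) (U 1) ≠ 0 := dd_of_li (by rw [hU]; exact hLI)
    refine ⟨U 0, U 1, hdd, ?_, ?_⟩
    · have := hw 0
      rw [widthIn_eq_wd _ _ hS] at this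
      exact_mod_cast by simpa using this
    · have := hw 1
      rw [widthIn_eq_wd _ _ hS] at this
      exact_mod_cast by simpa using this
  · intro u v hdd hu
    rcases decode u v hdd with h | ⟨_, h⟩
    · rw [hu] at h
      exact absurd h (lt_irrefl _)
    · exact_mod_cast h

-- ### transport of Good along unimodular affine maps

lemma det_ne_zero_of_isUnit {A : Matrix (Fin 2) (Fin 2) ℤ} (hA : IsUnit A.det) :
    A.det ≠ 0 := by
  rcases Int.isUnit_iff.mp hA with h | h <;> omega

lemma good_map {w1 w2 : ℤ} {S : Multiset V} (hG : Good w1 w2 S)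
    (A : Matrix (Fin 2) (Fin 2) ℤ) (hA : IsUnit A.det) (b : V) :
    Good w1 w2 (S.map (fun v => A.mulVec v + b)) := by
  classical
  have hS : S ≠ 0 := ne_zero_of_card4 hG.card4
  letI := A.invertibleOfIsUnitDet hA
  set B := ⅟A with hB
  have hBA : B * A = 1 := invOf_mul_self A
  have hAB : A * B = 1 := mul_invOf_self A
  have hvmBA : ∀ u : V, Matrix.vecMul (Matrix.vecMul u B) A = u := by
    intro u
    rw [Matrix.vecMul_vecMul, hBA, Matrix.vecMul_one]
  have hnz : ∀ u : V, u ≠ 0 → Matrix.vecMul u A ≠ 0 := by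
    intro u hu hcon
    apply hu
    have : Matrix.vecMul (Matrix.vecMul u A) B = u := by
      rw [Matrix.vecMul_vecMul, hAB, Matrix.vecMul_one]
    rw [← this, hcon, Matrix.zero_vecMul]
  have hdet : A.det ≠ 0 := det_ne_zero_of_isUnit hA
  refine ⟨by simpa using hG.card4, ?_, ?_, ?_⟩
  · obtain ⟨u, v, hdd, hu, hv⟩ := hG.ex
    refine ⟨Matrix.vecMul u B, Matrix.vecMul v B, ?_, ?_, ?_⟩
    · intro hcon
      apply hdd
      have := dd_vecMul (Matrix.vecMul u B) (Matrix.vecMul v B) A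
      rw [hvmBA, hvmBA, hcon] at this
      simpa using this
    · rw [wd_map_affine _ _ _ _ hS, hvmBA, hu]
    · rw [wd_map_affine _ _ _ _ hS, hvmBA, hv]
  · intro u hu
    rw [wd_map_affine _ _ _ _ hS]
    exact hG.min1 _ (hnz u hu)
  · intro u v hdd hu
    rw [wd_map_affine _ _ _ _ hS] at hu ⊢
    apply hG.min2 _ _ _ hu
    rw [dd_vecMul]
    exact mul_ne_zero hdd hdet

-- ### Part 4: MsetEquiv is an equivalence; normal forms

lemma msetEquiv_map (S : Multiset V) (A : Matrix (Fin 2) (Fin 2) ℤ) (hA : IsUnit A.det)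
    (b : V) : MsetEquiv S (S.map (fun v => A.mulVec v + b)) :=
  ⟨A, hA, b, rfl⟩

lemma msetEquiv_trans {S T U : Multiset V} (h1 : MsetEquiv S T) (h2 : MsetEquiv T U) :
    MsetEquiv S U := by
  obtain ⟨A, hA, b, rfl⟩ := h1
  obtain ⟨C, hC, d, rfl⟩ := h2
  refine ⟨C * A, ?_, C.mulVec b + d, ?_⟩
  · rw [Matrix.det_mul]; exact hC.mul hA
  · rw [Multiset.map_map]
    apply Multiset.map_congr rfl
    intro v _
    simp only [Function.comp_apply, Matrix.mulVec_add, Matrix.mulVec_mulVec]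
    abel

lemma msetEquiv_symm {S T : Multiset V} (h : MsetEquiv S T) : MsetEquiv T S := by
  classical
  obtain ⟨A, hA, b, rfl⟩ := h
  letI := A.invertibleOfIsUnitDet hA
  set B := ⅟A with hB
  have hBA : B * A = 1 := invOf_mul_self A
  refine ⟨B, ?_, -(B.mulVec b), ?_⟩
  · apply IsUnit.of_mul_eq_one A.det
    rw [← Matrix.det_mul, hBA, Matrix.det_one]
  · rw [Multiset.map_map]
    have : ∀ v : V, (fun w => B.mulVec w + -(B.mulVec b)) ((fun w => A.mulVec w + b) v) = v := by
      intro v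
      simp only [Matrix.mulVec_add, Matrix.mulVec_mulVec, hBA, Matrix.one_mulVec]
      abel
    calc Multiset.map _ S = Multiset.map id S :=
          Multiset.map_congr rfl (fun v _ => this v)
      _ = S := Multiset.map_id S

def ee1 : V := ![1, 0]
def ee2 : V := ![0, 1]

lemma ev_ee1 (v : V) : ev ee1 v = v 0 := by simp [ev_def, ee1]
lemma ev_ee2 (v : V) : ev ee2 v = v 1 := by simp [ev_def, ee2]

/-- reflection of the `y`-tuple -/
def reflY (w2 : ℤ) (y : Fin 4 → ℤ) : Fin 4 → ℤ := fun i => w2 - y i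

/-- explicit lexicographic "≤" on 4-tuples -/
def ylex (y z : Fin 4 → ℤ) : Prop :=
  y 0 < z 0 ∨ (y 0 = z 0 ∧ (y 1 < z 1 ∨ (y 1 = z 1 ∧ (y 2 < z 2 ∨ (y 2 = z 2 ∧ y 3 ≤ z 3)))))

lemma ylex_total (y z : Fin 4 → ℤ) : ylex y z ∨ ylex z y := by
  unfold ylex; omega

lemma reflY_reflY (w2 : ℤ) (y : Fin 4 → ℤ) : reflY w2 (reflY w2 y) = y := by
  funext i; simp [reflY]

/-- the normal-form multiset -/
def nf (w1 a b : ℤ) (y : Fin 4 → ℤ) : Multiset V :=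
  (↑[![0, y 0], ![a, y 1], ![b, y 2], ![w1, y 3]] : Multiset V)

/-- the normal-form conditions -/
def NFcond (w1 w2 : ℤ) (a b : ℤ) (y : Fin 4 → ℤ) : Prop :=
  0 ≤ a ∧ a ≤ b ∧ a + b ≤ w1 ∧ (∀ i, 0 ≤ y i ∧ y i ≤ w2) ∧
    (∃ i, y i = 0) ∧ (∃ i, y i = w2) ∧ ylex y (reflY w2 y)

/-- extraction of a sorted representation from a 4-point multiset in a box -/
lemma extract {w1 w2 : ℤ} (T : Multiset V) (hc : Multiset.card T = 4)
    (hbox : ∀ x ∈ T, 0 ≤ x 0 ∧ x 0 ≤ w1 ∧ 0 ≤ x 1 ∧ x 1 ≤ w2)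
    (h0x : ∃ x ∈ T, x 0 = 0) (h1x : ∃ x ∈ T, x 0 = w1)
    (h0y : ∃ x ∈ T, x 1 = 0) (h1y : ∃ x ∈ T, x 1 = w2) :
    ∃ a b y, (0 ≤ a ∧ a ≤ b ∧ b ≤ w1 ∧ (∀ i, 0 ≤ y i ∧ y i ≤ w2) ∧
      (∃ i, y i = 0) ∧ (∃ i, y i = w2)) ∧ T = nf w1 a b y := by
  classical
  set le : V → V → Bool := fun v w => decide (v 0 ≤ w 0) with hle
  set l : List V := T.toList.mergeSort le with hl
  have hperm : l.Perm T.toList := List.mergeSort_perm T.toList le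
  have hTl : (l : Multiset V) = T := by
    rw [Multiset.coe_eq_coe.mpr hperm, Multiset.coe_toList]
  have hlen : l.length = 4 := by
    rw [hperm.length_eq, Multiset.length_toList, hc]
  have hsorted : List.Pairwise (fun a b => le a b = true) l :=
    List.pairwise_mergeSort (le := le)
      (by intro a b c hab hbc; simp only [hle, decide_eq_true_eq] at *; omega)
      (by intro a b; simp only [hle, Bool.or_eq_true, decide_eq_true_eq]; omega)
      T.toList
  match l, hlen with
  | [z0, z1, z2, z3], _ =>
  simp only [List.pairwise_cons, List.mem_cons, List.mem_singleton, List.not_mem_nil,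
    hle, decide_eq_true_eq] at hsorted
  have hs01 : z0 0 ≤ z1 0 := by tauto
  have hs12 : z1 0 ≤ z2 0 := by tauto
  have hs23 : z2 0 ≤ z3 0 := by tauto
  have hmem : ∀ x, x ∈ T ↔ (x = z0 ∨ x = z1 ∨ x = z2 ∨ x = z3) := by
    intro x
    rw [← hTl]
    simp [List.mem_cons]
  have hb0 := hbox z0 ((hmem z0).mpr (by tauto))
  have hb1 := hbox z1 ((hmem z1).mpr (by tauto))
  have hb2 := hbox z2 ((hmem z2).mpr (by tauto))
  have hb3 := hbox z3 ((hmem z3).mpr (by tauto))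
  have hz00 : z0 0 = 0 := by
    obtain ⟨x, hx, hx0⟩ := h0x
    rcases (hmem x).mp hx with rfl | rfl | rfl | rfl <;> omega
  have hz30 : z3 0 = w1 := by
    obtain ⟨x, hx, hx0⟩ := h1x
    rcases (hmem x).mp hx with rfl | rfl | rfl | rfl <;> omega
  refine ⟨z1 0, z2 0, ![z0 1, z1 1, z2 1, z3 1], ⟨by omega, by omega, by omega, ?_, ?_, ?_⟩, ?_⟩
  · intro i; fin_cases i <;> simp <;> omega
  · obtain ⟨x, hx, hx1⟩ := h0y
    rcases (hmem x).mp hx with rfl | rfl | rfl | rfl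
    · exact ⟨0, by simpa using hx1⟩
    · exact ⟨1, by simpa using hx1⟩
    · exact ⟨2, by simpa using hx1⟩
    · exact ⟨3, by simpa using hx1⟩
  · obtain ⟨x, hx, hx1⟩ := h1y
    rcases (hmem x).mp hx with rfl | rfl | rfl | rfl
    · exact ⟨0, by simpa using hx1⟩
    · exact ⟨1, by simpa using hx1⟩
    · exact ⟨2, by simpa using hx1⟩
    · exact ⟨3, by simpa using hx1⟩
  · rw [← hTl, nf]
    congr 1
    have e0 : ![(0:ℤ), z0 1] = z0 := by
      funext i; fin_cases i
      · simp [hz00.symm]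
      · simp
    have e1 : ![z1 0, z1 1] = z1 := by
      funext i; fin_cases i <;> simp
    have e2 : ![z2 0, z2 1] = z2 := by
      funext i; fin_cases i <;> simp
    have e3 : ![w1, z3 1] = z3 := by
      funext i; fin_cases i
      · simp [hz30.symm]
      · simp
    have hy0 : (![z0 1, z1 1, z2 1, z3 1] : Fin 4 → ℤ) 0 = z0 1 := rfl
    have hy1 : (![z0 1, z1 1, z2 1, z3 1] : Fin 4 → ℤ) 1 = z1 1 := rfl
    have hy2 : (![z0 1, z1 1, z2 1, z3 1] : Fin 4 → ℤ) 2 = z2 1 := rfl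
    have hy3 : (![z0 1, z1 1, z2 1, z3 1] : Fin 4 → ℤ) 3 = z3 1 := rfl
    rw [hy0, hy1, hy2, hy3, e0, e1, e2, e3]

-- ### Part 4b: normalization

lemma comp_ne_zero {u : V} (hu : u ≠ 0) : u 0 ≠ 0 ∨ u 1 ≠ 0 := by
  by_contra hcon
  push_neg at hcon
  exact hu (by funext i; fin_cases i <;> simp [hcon.1, hcon.2])

lemma gcd_one_of_wd {w1 w2 : ℤ} (h0 : 0 < w1) {S : Multiset V} (hG : Good w1 w2 S)
    {u : V} (hu : u ≠ 0) (hwd : wd u S = w1) : Int.gcd (u 0) (u 1) = 1 := by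
  have hS := ne_zero_of_card4 hG.card4
  set g : ℤ := (Int.gcd (u 0) (u 1) : ℤ) with hg
  have hgpos : 0 < g := by
    rw [hg]
    exact_mod_cast Nat.pos_of_ne_zero (fun hcon => by
      rcases comp_ne_zero hu with h | h
      · exact h (Int.gcd_eq_zero_iff.mp hcon).1
      · exact h (Int.gcd_eq_zero_iff.mp hcon).2)
  have hdvd0 : g ∣ u 0 := Int.gcd_dvd_left _ _
  have hdvd1 : g ∣ u 1 := Int.gcd_dvd_right _ _
  set u' : V := ![u 0 / g, u 1 / g] with hu'
  have hueq : u = g • u' := by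
    funext i
    fin_cases i
    · show u 0 = g * (u 0 / g)
      rw [Int.mul_ediv_cancel' hdvd0]
    · show u 1 = g * (u 1 / g)
      rw [Int.mul_ediv_cancel' hdvd1]
  have hu'ne : u' ≠ 0 := fun hcon => hu (by rw [hueq, hcon, smul_zero])
  have hmin := hG.min1 u' hu'ne
  have h2 : wd u S = g * wd u' S := by
    rw [hueq]
    exact wd_smul g (le_of_lt hgpos) u' S hS
  have : g = 1 := by nlinarith [hmin, hgpos, h2, hwd]
  exact_mod_cast hg ▸ this

lemma round_bound (w1 w2 p q r m Dx Dy : ℤ) (h0 : 0 < w1) (h12 : w1 ≤ w2) (hq : 0 < q)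
    (hdiv : 2*q*r + m = 2*p + q) (hm0 : 0 ≤ m) (hm2 : m < 2*q)
    (hDx1 : Dx ≤ w1) (hDx2 : -Dx ≤ w1) (hpq : p*Dx + q*Dy ≤ w2) :
    r*Dx + Dy ≤ w2 := by
  have hw2 : 0 < w2 := lt_of_lt_of_le h0 h12
  rcases le_or_gt 2 q with hq2 | hq1
  · have key : 2*q*(r*Dx + Dy) = 2*(p*Dx + q*Dy) + (q - m)*Dx := by
      linear_combination Dx * hdiv
    have haux : (q - m)*Dx ≤ q*w1 := by
      rcases le_total 0 (q - m) with h | h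
      · calc (q-m)*Dx ≤ (q-m)*w1 := mul_le_mul_of_nonneg_left hDx1 h
          _ ≤ q*w1 := mul_le_mul_of_nonneg_right (by omega) (by omega)
      · calc (q-m)*Dx ≤ (q-m)*(-w1) := by nlinarith
          _ = (m-q)*w1 := by ring
          _ ≤ q*w1 := mul_le_mul_of_nonneg_right (by omega) (by omega)
    have s2 : q*w1 ≤ q*w2 := mul_le_mul_of_nonneg_left h12 (by omega)
    have s3 : 2*w2 ≤ q*w2 := mul_le_mul_of_nonneg_right hq2 (by omega)
    have h2q : 2*q*(r*Dx + Dy) ≤ 2*q*w2 := by nlinarith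
    exact le_of_mul_le_mul_left h2q (by omega)
  · have hq1' : q = 1 := by omega
    subst hq1'
    have hpr : p = r := by omega
    subst hpr
    linarith

theorem normalize {w1 w2 : ℤ} (h0 : 0 < w1) (h12 : w1 ≤ w2) {S : Multiset V}
    (hG : Good w1 w2 S) :
    ∃ a b y, NFcond w1 w2 a b y ∧ MsetEquiv S (nf w1 a b y) := by
  classical
  have hw2pos : 0 < w2 := lt_of_lt_of_le h0 h12
  have hSne : S ≠ 0 := ne_zero_of_card4 hG.card4
  obtain ⟨u, v, hdd, hu, hv⟩ := hG.ex
  have hune : u ≠ 0 := by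
    rintro rfl
    simp [dd] at hdd
  have hgcd : Int.gcd (u 0) (u 1) = 1 := gcd_one_of_wd h0 hG hune hu
  set A1 : Matrix (Fin 2) (Fin 2) ℤ :=
    Matrix.of ![![u 0, u 1], ![-(Int.gcdB (u 0) (u 1)), Int.gcdA (u 0) (u 1)]] with hA1
  have hdetA1 : A1.det = 1 := by
    rw [Matrix.det_fin_two]
    have hbez := Int.gcd_eq_gcd_ab (u 0) (u 1)
    rw [hgcd] at hbez
    simp only [hA1, Matrix.of_apply, Matrix.cons_val', Matrix.cons_val_zero,
      Matrix.cons_val_one, Matrix.head_cons, Matrix.empty_val', Matrix.cons_val_fin_one,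
      Matrix.head_fin_const]
    push_cast at hbez
    linarith [hbez]
  have hA1unit : IsUnit A1.det := by rw [hdetA1]; exact isUnit_one
  have hrow : Matrix.vecMul ee1 A1 = u := by
    funext j
    fin_cases j <;>
      simp [Matrix.vecMul, dotProduct, Fin.sum_univ_two, ee1, hA1]
  set T1 := S.map (fun x => A1.mulVec x + 0) with hT1
  have hGT1 : Good w1 w2 T1 := good_map hG A1 hA1unit 0
  have hT1ne : T1 ≠ 0 := ne_zero_of_card4 hGT1.card4
  have hET1 : MsetEquiv S T1 := msetEquiv_map S A1 hA1unit 0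
  have hwd1 : wd ee1 T1 = w1 := by
    rw [hT1, wd_map_affine _ _ _ _ hSne, hrow, hu]
  letI := A1.invertibleOfIsUnitDet hA1unit
  set v2' : V := Matrix.vecMul v (⅟A1) with hv2'
  have hv2'A : Matrix.vecMul v2' A1 = v := by
    rw [hv2', Matrix.vecMul_vecMul, invOf_mul_self, Matrix.vecMul_one]
  have hwdv2' : wd v2' T1 = w2 := by
    rw [hT1, wd_map_affine _ _ _ _ hSne, hv2'A, hv]
  have hq' : dd ee1 v2' ≠ 0 := by
    intro hcon
    apply hdd
    have hd := dd_vecMul ee1 v2' A1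
    rw [hrow, hv2'A, hcon] at hd
    simpa using hd
  have hq'ne : v2' 1 ≠ 0 := by
    intro hcon
    apply hq'
    simp [dd, ee1, hcon]
  obtain ⟨p, q, hqpos, hwpq⟩ : ∃ p q : ℤ, 0 < q ∧ wd ![p, q] T1 = w2 := by
    rcases lt_trichotomy (v2' 1) 0 with hneg | hzero | hpos
    · refine ⟨-(v2' 0), -(v2' 1), by omega, ?_⟩
      have hvv : (![-(v2' 0), -(v2' 1)] : V) = -v2' := by
        funext i; fin_cases i <;> simp
      rw [hvv, wd_neg _ _ hT1ne, hwdv2']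
    · exact absurd hzero hq'ne
    · refine ⟨v2' 0, v2' 1, hpos, ?_⟩
      have hvv : (![v2' 0, v2' 1] : V) = v2' := by
        funext i; fin_cases i <;> simp
      rw [hvv, hwdv2']
  set r := (2*p + q) / (2*q) with hr
  set m := (2*p + q) % (2*q) with hm
  have hdiv : 2*q*r + m = 2*p + q := Int.mul_ediv_add_emod (2*p + q) (2*q)
  have hm0 : 0 ≤ m := Int.emod_nonneg _ (by omega)
  have hm2 : m < 2*q := Int.emod_lt_of_pos _ (by omega)
  have hble : wd ![r, 1] T1 ≤ w2 := by
    apply wd_le hT1ne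
    intro x hx x' hx'
    have hax := pair_le_wd (u := ee1) hx hx'
    have hax' := pair_le_wd (u := ee1) hx' hx
    have hbx := pair_le_wd (u := ![p,q]) hx hx'
    rw [hwd1] at hax hax'
    rw [hwpq] at hbx
    simp only [ev_ee1] at hax hax'
    rw [ev_def, ev_def] at hbx
    simp only [Matrix.cons_val_zero, Matrix.cons_val_one, Matrix.head_cons] at hbx
    have hkey := round_bound w1 w2 p q r m (x 0 - x' 0) (x 1 - x' 1) h0 h12 hqpos hdiv hm0 hm2
      (by omega) (by omega) (by linarith [hbx])
    rw [ev_def, ev_def]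
    simp only [Matrix.cons_val_zero, Matrix.cons_val_one, Matrix.head_cons]
    linarith [hkey]
  have hwd2 : wd ![r, 1] T1 = w2 := by
    apply le_antisymm hble
    apply hGT1.min2 ee1 ![r, 1] _ hwd1
    norm_num [dd, ee1]
  set A2 : Matrix (Fin 2) (Fin 2) ℤ := Matrix.of ![![(1:ℤ), 0], ![r, 1]] with hA2
  have hdetA2 : A2.det = 1 := by
    rw [Matrix.det_fin_two]
    simp [hA2]
  have hA2unit : IsUnit A2.det := by rw [hdetA2]; exact isUnit_one
  have hrow1 : Matrix.vecMul ee1 A2 = ee1 := by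
    funext j
    fin_cases j <;>
      simp [Matrix.vecMul, dotProduct, Fin.sum_univ_two, ee1, hA2]
  have hrow2 : Matrix.vecMul ee2 A2 = ![r, 1] := by
    funext j
    fin_cases j <;>
      simp [Matrix.vecMul, dotProduct, Fin.sum_univ_two, ee2, hA2]
  set T2 := T1.map (fun x => A2.mulVec x + 0) with hT2
  have hGT2 : Good w1 w2 T2 := good_map hGT1 A2 hA2unit 0
  have hT2ne : T2 ≠ 0 := ne_zero_of_card4 hGT2.card4
  have hET2 : MsetEquiv S T2 := msetEquiv_trans hET1 (msetEquiv_map T1 A2 hA2unit 0)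
  have hwd1' : wd ee1 T2 = w1 := by
    rw [hT2, wd_map_affine _ _ _ _ hT1ne, hrow1, hwd1]
  have hwd2' : wd ee2 T2 = w2 := by
    rw [hT2, wd_map_affine _ _ _ _ hT1ne, hrow2, hwd2]
  -- translation into the box
  set bsh : V := ![-(mn ee1 T2), -(mn ee2 T2)] with hbsh
  set T3 := T2.map (fun x => (1 : Matrix (Fin 2) (Fin 2) ℤ).mulVec x + bsh) with hT3
  have hGT3 : Good w1 w2 T3 := good_map hGT2 1 (by simp) bsh
  have hET3 : MsetEquiv S T3 := msetEquiv_trans hET2 (msetEquiv_map T2 1 (by simp) bsh)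
  have hmem3 : ∀ x, x ∈ T3 ↔ ∃ z ∈ T2, z + bsh = x := by
    intro x
    rw [hT3, Multiset.mem_map]
    constructor
    · rintro ⟨z, hz, rfl⟩
      exact ⟨z, hz, by rw [Matrix.one_mulVec]⟩
    · rintro ⟨z, hz, rfl⟩
      exact ⟨z, hz, by rw [Matrix.one_mulVec]⟩
  have hmx1 : mx ee1 T2 = mn ee1 T2 + w1 := by
    have : wd ee1 T2 = mx ee1 T2 - mn ee1 T2 := rfl
    omega
  have hmx2 : mx ee2 T2 = mn ee2 T2 + w2 := by
    have : wd ee2 T2 = mx ee2 T2 - mn ee2 T2 := rfl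
    omega
  have hcoord : ∀ z : V, (z + bsh) 0 = z 0 - mn ee1 T2 ∧ (z + bsh) 1 = z 1 - mn ee2 T2 := by
    intro z
    constructor <;> simp [hbsh] <;> ring
  have hbox : ∀ x ∈ T3, 0 ≤ x 0 ∧ x 0 ≤ w1 ∧ 0 ≤ x 1 ∧ x 1 ≤ w2 := by
    intro x hx
    obtain ⟨z, hz, rfl⟩ := (hmem3 x).mp hx
    obtain ⟨h1, h2⟩ := hcoord z
    have e1 := mn_le (u := ee1) hz
    have e2 := le_mx (u := ee1) hz
    have e3 := mn_le (u := ee2) hz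
    have e4 := le_mx (u := ee2) hz
    rw [ev_ee1] at e1 e2
    rw [ev_ee2] at e3 e4
    omega
  have h0x : ∃ x ∈ T3, x 0 = 0 := by
    obtain ⟨z, hz, hzv⟩ := exists_mn (u := ee1) hT2ne
    refine ⟨z + bsh, (hmem3 _).mpr ⟨z, hz, rfl⟩, ?_⟩
    rw [ev_ee1] at hzv
    have := (hcoord z).1
    omega
  have h1x : ∃ x ∈ T3, x 0 = w1 := by
    obtain ⟨z, hz, hzv⟩ := exists_mx (u := ee1) hT2ne
    refine ⟨z + bsh, (hmem3 _).mpr ⟨z, hz, rfl⟩, ?_⟩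
    rw [ev_ee1] at hzv
    have := (hcoord z).1
    omega
  have h0y : ∃ x ∈ T3, x 1 = 0 := by
    obtain ⟨z, hz, hzv⟩ := exists_mn (u := ee2) hT2ne
    refine ⟨z + bsh, (hmem3 _).mpr ⟨z, hz, rfl⟩, ?_⟩
    rw [ev_ee2] at hzv
    have := (hcoord z).2
    omega
  have h1y : ∃ x ∈ T3, x 1 = w2 := by
    obtain ⟨z, hz, hzv⟩ := exists_mx (u := ee2) hT2ne
    refine ⟨z + bsh, (hmem3 _).mpr ⟨z, hz, rfl⟩, ?_⟩
    rw [ev_ee2] at hzv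
    have := (hcoord z).2
    omega
  obtain ⟨a, b, y, ⟨ha0, hab, hbw, hy, hy0, hyw⟩, hTnf⟩ :=
    extract T3 hGT3.card4 hbox h0x h1x h0y h1y
  have hETnf : MsetEquiv S (nf w1 a b y) := hTnf ▸ hET3
  -- x-flip to ensure a + b ≤ w1
  obtain ⟨a', b', y', hcond', hET'⟩ :
      ∃ (a' b' : ℤ) (y' : Fin 4 → ℤ), (0 ≤ a' ∧ a' ≤ b' ∧ a' + b' ≤ w1 ∧
        (∀ i, 0 ≤ y' i ∧ y' i ≤ w2) ∧ (∃ i, y' i = 0) ∧ (∃ i, y' i = w2)) ∧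
        MsetEquiv S (nf w1 a' b' y') := by
    rcases le_or_gt (a + b) w1 with hle | hgt
    · exact ⟨a, b, y, ⟨ha0, hab, hle, hy, hy0, hyw⟩, hETnf⟩
    · set AX : Matrix (Fin 2) (Fin 2) ℤ := Matrix.of ![![(-1:ℤ), 0], ![0, 1]] with hAX
      have hdetAX : IsUnit AX.det := by
        rw [Matrix.det_fin_two]
        simp [hAX]
      have hflip : (nf w1 a b y).map (fun x => AX.mulVec x + ![w1, 0])
          = nf w1 (w1 - b) (w1 - a) ![y 3, y 2, y 1, y 0] := by
        have hF : ∀ c d : ℤ, (fun x => AX.mulVec x + ![w1, 0]) ![c, d] = ![w1 - c, d] := by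
          intro c d
          funext i
          fin_cases i <;>
            simp [hAX, Matrix.mulVec, dotProduct, Fin.sum_univ_two] <;> ring
        rw [nf, Multiset.map_coe]
        rw [show List.map (fun x => AX.mulVec x + ![w1, 0])
            [![0, y 0], ![a, y 1], ![b, y 2], ![w1, y 3]]
            = [![w1 - 0, y 0], ![w1 - a, y 1], ![w1 - b, y 2], ![w1 - w1, y 3]] by
          simp only [List.map, hF]]
        rw [nf]
        apply Multiset.coe_eq_coe.mpr
        have hyv0 : (![y 3, y 2, y 1, y 0] : Fin 4 → ℤ) 0 = y 3 := rfl
        have hyv1 : (![y 3, y 2, y 1, y 0] : Fin 4 → ℤ) 1 = y 2 := rfl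
        have hyv2 : (![y 3, y 2, y 1, y 0] : Fin 4 → ℤ) 2 = y 1 := rfl
        have hyv3 : (![y 3, y 2, y 1, y 0] : Fin 4 → ℤ) 3 = y 0 := rfl
        rw [hyv0, hyv1, hyv2, hyv3]
        have e1 : (![w1 - 0, y 0] : V) = ![w1, y 0] := by
          funext i; fin_cases i <;> simp
        have e2 : (![w1 - w1, y 3] : V) = ![(0:ℤ), y 3] := by
          funext i; fin_cases i <;> simp
        rw [e1, e2]
        exact (List.reverse_perm _).symm
      refine ⟨w1 - b, w1 - a, ![y 3, y 2, y 1, y 0], ⟨by omega, by omega, by omega, ?_, ?_, ?_⟩, ?_⟩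
      · intro i
        fin_cases i <;> simp <;> [exact hy 3; exact hy 2; exact hy 1; exact hy 0]
      · obtain ⟨i, hi⟩ := hy0
        fin_cases i
        · exact ⟨3, by simpa using hi⟩
        · exact ⟨2, by simpa using hi⟩
        · exact ⟨1, by simpa using hi⟩
        · exact ⟨0, by simpa using hi⟩
      · obtain ⟨i, hi⟩ := hyw
        fin_cases i
        · exact ⟨3, by simpa using hi⟩
        · exact ⟨2, by simpa using hi⟩
        · exact ⟨1, by simpa using hi⟩
        · exact ⟨0, by simpa using hi⟩
      · rw [← hflip]
        exact msetEquiv_trans hETnf (msetEquiv_map _ AX hdetAX ![w1, 0])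
  -- y-flip to ensure canonicity
  rcases ylex_total y' (reflY w2 y') with hcanon | hcanon
  · exact ⟨a', b', y', ⟨hcond'.1, hcond'.2.1, hcond'.2.2.1, hcond'.2.2.2.1,
      hcond'.2.2.2.2.1, hcond'.2.2.2.2.2, hcanon⟩, hET'⟩
  · set AY : Matrix (Fin 2) (Fin 2) ℤ := Matrix.of ![![(1:ℤ), 0], ![0, -1]] with hAY
    have hdetAY : IsUnit AY.det := by
      rw [Matrix.det_fin_two]
      simp [hAY]
    have hflip : (nf w1 a' b' y').map (fun x => AY.mulVec x + ![0, w2])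
        = nf w1 a' b' (reflY w2 y') := by
      have hF : ∀ c d : ℤ, (fun x => AY.mulVec x + ![0, w2]) ![c, d] = ![c, w2 - d] := by
        intro c d
        funext i
        fin_cases i <;>
          simp [hAY, Matrix.mulVec, dotProduct, Fin.sum_univ_two] <;> ring
      rw [nf, Multiset.map_coe, nf]
      congr 1
      simp only [List.map, hF]
      rfl
    refine ⟨a', b', reflY w2 y', ⟨hcond'.1, hcond'.2.1, hcond'.2.2.1, ?_, ?_, ?_, ?_⟩, ?_⟩
    · intro i
      have := hcond'.2.2.2.1 i
      simp only [reflY]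
      omega
    · obtain ⟨i, hi⟩ := hcond'.2.2.2.2.2
      exact ⟨i, by simp [reflY, hi]⟩
    · obtain ⟨i, hi⟩ := hcond'.2.2.2.2.1
      exact ⟨i, by simp [reflY, hi]⟩
    · rw [reflY_reflY]
      exact hcanon
    · rw [← hflip]
      exact msetEquiv_trans hET' (msetEquiv_map _ AY hdetAY ![0, w2])

-- ### Part 5: counting

lemma ylex_antisymm {y z : Fin 4 → ℤ} (h1 : ylex y z) (h2 : ylex z y) : y = z := by
  have e0 : y 0 = z 0 := by unfold ylex at h1 h2; omega
  have e1 : y 1 = z 1 := by unfold ylex at h1 h2; omega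
  have e2 : y 2 = z 2 := by unfold ylex at h1 h2; omega
  have e3 : y 3 = z 3 := by unfold ylex at h1 h2; omega
  funext i
  fin_cases i
  · exact e0
  · exact e1
  · exact e2
  · exact e3

instance ylex_dec (y z : Fin 4 → ℤ) : Decidable (ylex y z) := by
  unfold ylex
  infer_instance

/-- the (a,b) parameter set -/
def FAB (w1 : ℤ) : Finset (ℤ × ℤ) :=
  (Finset.Icc 0 w1 ×ˢ Finset.Icc 0 w1).filter (fun ab => ab.1 ≤ ab.2 ∧ ab.1 + ab.2 ≤ w1)

/-- the y parameter set -/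
def FY (w2 : ℤ) : Finset (Fin 4 → ℤ) :=
  (Fintype.piFinset fun _ : Fin 4 => Finset.Icc 0 w2).filter
    (fun y => (∃ i, y i = 0) ∧ (∃ i, y i = w2) ∧ ylex y (reflY w2 y))

lemma sum_Icc_cast (K : ℤ) (h : 0 ≤ K) :
    ∑ a ∈ Finset.Icc (0:ℤ) K, (a : ℚ) = K*(K+1)/2 := by
  refine Int.le_induction (motive := fun K _ => ∑ a ∈ Finset.Icc (0:ℤ) K, (a:ℚ) = K*(K+1)/2) ?_ ?_ K h
  · simp
  · intro n hn ih
    have hins : Finset.Icc (0:ℤ) (n+1) = insert (n+1) (Finset.Icc 0 n) := by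
      ext x
      simp only [Finset.mem_Icc, Finset.mem_insert]
      omega
    rw [hins, Finset.sum_insert (by simp only [Finset.mem_Icc]; omega), ih]
    push_cast
    ring

lemma card_Icc_cast (K : ℤ) (h : 0 ≤ K) : ((Finset.Icc (0:ℤ) K).card : ℚ) = K + 1 := by
  rw [Int.card_Icc]
  have h2 : (((K + 1 - 0).toNat : ℤ) : ℚ) = ((K + 1 - 0 : ℤ) : ℚ) :=
    congrArg (Int.cast : ℤ → ℚ) (Int.toNat_of_nonneg (by omega))
  push_cast at h2 ⊢
  linarith

lemma card_FAB (w1 : ℤ) (h0 : 0 < w1) :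
    ((FAB w1).card : ℚ) = (w1:ℚ)^2/4 + (w1:ℚ) + (if Even w1 then (1:ℚ) else 3/4) := by
  classical
  set K := w1 / 2 with hK
  have hKf : 2*K ≤ w1 ∧ w1 ≤ 2*K + 1 ∧ 0 ≤ K := by omega
  have hsplit : FAB w1 = (Finset.Icc (0:ℤ) K).biUnion
      (fun a => ({a} : Finset ℤ) ×ˢ Finset.Icc a (w1 - a)) := by
    ext ab
    simp only [FAB, Finset.mem_filter, Finset.mem_product, Finset.mem_Icc,
      Finset.mem_biUnion, Finset.mem_singleton]
    constructor
    · rintro ⟨⟨⟨ha0, haw⟩, hb0, hbw⟩, hab, habw⟩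
      exact ⟨ab.1, by omega, rfl, by omega⟩
    · rintro ⟨a, ⟨ha0, haK⟩, rfl, hb⟩
      exact ⟨⟨⟨ha0, by omega⟩, by omega⟩, by omega⟩
  have hdisj : ∀ a ∈ Finset.Icc (0:ℤ) K, ∀ b ∈ Finset.Icc (0:ℤ) K, a ≠ b →
      Disjoint (({a} : Finset ℤ) ×ˢ Finset.Icc a (w1 - a))
        (({b} : Finset ℤ) ×ˢ Finset.Icc b (w1 - b)) := by
    intro a _ b _ hab
    rw [Finset.disjoint_left]
    rintro ⟨x, y⟩ hx hy
    simp only [Finset.mem_product, Finset.mem_singleton] at hx hy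
    exact hab (hx.1.symm.trans hy.1)
  have hterm : ∀ a ∈ Finset.Icc (0:ℤ) K,
      ((({a} : Finset ℤ) ×ˢ Finset.Icc a (w1 - a)).card : ℚ) = (w1:ℚ) + 1 - 2*(a:ℚ) := by
    intro a ha
    simp only [Finset.mem_Icc] at ha
    rw [Finset.card_product, Finset.card_singleton, one_mul, Int.card_Icc]
    have h2 : (((w1 - a + 1 - a).toNat : ℤ) : ℚ) = ((w1 - a + 1 - a : ℤ) : ℚ) :=
      congrArg (Int.cast : ℤ → ℚ) (Int.toNat_of_nonneg (by omega))
    push_cast at h2 ⊢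
    linarith
  rw [hsplit, Finset.card_biUnion hdisj]
  have hsum : ((∑ a ∈ Finset.Icc (0:ℤ) K,
      (({a} : Finset ℤ) ×ˢ Finset.Icc a (w1 - a)).card : ℕ) : ℚ)
      = ∑ a ∈ Finset.Icc (0:ℤ) K, ((w1:ℚ) + 1 - 2*(a:ℚ)) := by
    push_cast
    exact Finset.sum_congr rfl (by
      intro a ha
      have := hterm a ha
      push_cast at this ⊢
      linarith)
  rw [hsum, Finset.sum_sub_distrib, Finset.sum_const, ← Finset.mul_sum,
    sum_Icc_cast K hKf.2.2, nsmul_eq_mul, card_Icc_cast K hKf.2.2]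
  rcases Int.even_or_odd w1 with ⟨k, hk⟩ | ⟨k, hk⟩
  · rw [if_pos ⟨k, hk⟩]
    have hKk : K = k := by omega
    rw [hKk, hk]
    push_cast
    ring
  · rw [if_neg (by
      rw [Int.not_even_iff_odd]
      exact ⟨k, hk⟩)]
    have hKk : K = k := by omega
    rw [hKk, hk]
    push_cast
    ring

lemma toNat_cast_q {x : ℤ} (h : 0 ≤ x) : ((x.toNat : ℕ) : ℚ) = (x : ℚ) := by
  exact_mod_cast congrArg (Int.cast : ℤ → ℚ) (Int.toNat_of_nonneg h)

lemma card_piFinset_Icc (lo hi : ℤ) :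
    (Fintype.piFinset (fun _ : Fin 4 => Finset.Icc lo hi)).card = ((hi + 1 - lo).toNat)^4 := by
  rw [Fintype.card_piFinset]
  simp [Int.card_Icc]

lemma card_FY (w2 : ℤ) (h2 : 0 < w2) : ((FY w2).card : ℚ) ≤ 6*(w2:ℚ)^2 + 1 := by
  classical
  set box : Finset (Fin 4 → ℤ) := Fintype.piFinset (fun _ : Fin 4 => Finset.Icc 0 w2) with hbox
  set P : (Fin 4 → ℤ) → Prop := fun y => (∃ i, y i = 0) ∧ (∃ i, y i = w2) with hP
  set C : (Fin 4 → ℤ) → Prop := fun y => ylex y (reflY w2 y) with hC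
  have hFY : FY w2 = (box.filter P).filter C := by
    rw [Finset.filter_filter]
    ext y
    simp only [FY, Finset.mem_filter, hP, hC]
    tauto
  have hinj : ((box.filter P).filter C).card ≤
      ((box.filter P).filter (fun y => ¬ C y)).card := by
    apply Finset.card_le_card_of_injOn (reflY w2)
    · intro y hy
      simp only [Finset.mem_coe, Finset.mem_filter, hP, hC, Fintype.mem_piFinset, Finset.mem_Icc, hbox] at hy ⊢
      obtain ⟨⟨hyb, hy0, hyw⟩, hcanon⟩ := hy
      refine ⟨⟨?_, ?_, ?_⟩, ?_⟩
      · intro i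
        have := hyb i
        simp only [reflY]
        omega
      · obtain ⟨i, hi⟩ := hyw
        exact ⟨i, by simp [reflY, hi]⟩
      · obtain ⟨i, hi⟩ := hy0
        exact ⟨i, by simp [reflY, hi]⟩
      · intro hcon
        rw [reflY_reflY] at hcon
        have heq := ylex_antisymm hcanon hcon
        obtain ⟨i, hi⟩ := hy0
        have := congrFun heq i
        rw [hi] at this
        simp only [reflY, hi] at this
        omega
    · intro y _ z _ hyz
      have := congrArg (reflY w2) hyz
      rwa [reflY_reflY, reflY_reflY] at this
  have hsplitcard : ((box.filter P).filter C).card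
      + ((box.filter P).filter (fun y => ¬ C y)).card = (box.filter P).card :=
    Finset.card_filter_add_card_filter_not C
  set A : Finset (Fin 4 → ℤ) := box.filter (fun y => ¬ ∃ i, y i = 0) with hA
  set B : Finset (Fin 4 → ℤ) := box.filter (fun y => ¬ ∃ i, y i = w2) with hB
  have hPneg : box.filter (fun y => ¬ P y) = A ∪ B := by
    rw [hA, hB, ← Finset.filter_or]
    apply Finset.filter_congr
    intro y _
    rw [hP]
    tauto
  have h1 : (box.filter P).card + (A ∪ B).card = box.card := by
    rw [← hPneg]
    exact Finset.card_filter_add_card_filter_not P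
  have h2' : (A ∪ B).card + (A ∩ B).card = A.card + B.card :=
    Finset.card_union_add_card_inter A B
  have hAeq : A = Fintype.piFinset (fun _ : Fin 4 => Finset.Icc 1 w2) := by
    ext y
    simp only [hA, Finset.mem_filter, Fintype.mem_piFinset, Finset.mem_Icc, hbox, not_exists]
    constructor
    · rintro ⟨hb, hne⟩ i
      have := hb i
      have := hne i
      omega
    · intro h
      exact ⟨fun i => by have := h i; omega, fun i => by have := h i; omega⟩
  have hBeq : B = Fintype.piFinset (fun _ : Fin 4 => Finset.Icc 0 (w2 - 1)) := by
    ext y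
    simp only [hB, Finset.mem_filter, Fintype.mem_piFinset, Finset.mem_Icc, hbox, not_exists]
    constructor
    · rintro ⟨hb, hne⟩ i
      have := hb i
      have := hne i
      omega
    · intro h
      exact ⟨fun i => by have := h i; omega, fun i => by have := h i; omega⟩
  have hABeq : A ∩ B = Fintype.piFinset (fun _ : Fin 4 => Finset.Icc 1 (w2 - 1)) := by
    ext y
    simp only [Finset.mem_inter, hA, hB, Finset.mem_filter, Fintype.mem_piFinset,
      Finset.mem_Icc, hbox, not_exists]
    constructor
    · rintro ⟨⟨hb, hne0⟩, _, hnew⟩ i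
      have := hb i
      have := hne0 i
      have := hnew i
      omega
    · intro h
      exact ⟨⟨fun i => by have := h i; omega, fun i => by have := h i; omega⟩,
        fun i => by have := h i; omega, fun i => by have := h i; omega⟩
  have hboxq : ((box.card : ℕ) : ℚ) = ((w2:ℚ) + 1)^4 := by
    rw [hbox, card_piFinset_Icc]
    push_cast [toNat_cast_q (show (0:ℤ) ≤ w2 + 1 - 0 by omega)]
    ring
  have hAq : ((A.card : ℕ) : ℚ) = (w2:ℚ)^4 := by
    rw [hAeq, card_piFinset_Icc]
    push_cast [toNat_cast_q (show (0:ℤ) ≤ w2 + 1 - 1 by omega)]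
    ring
  have hBq : ((B.card : ℕ) : ℚ) = (w2:ℚ)^4 := by
    rw [hBeq, card_piFinset_Icc]
    push_cast [toNat_cast_q (show (0:ℤ) ≤ w2 - 1 + 1 - 0 by omega)]
    ring
  have hABq : ((A ∩ B).card : ℚ) = ((w2:ℚ) - 1)^4 := by
    rw [hABeq, card_piFinset_Icc]
    push_cast [toNat_cast_q (show (0:ℤ) ≤ w2 - 1 + 1 - 1 by omega)]
    ring
  have h1q : ((box.filter P).card : ℚ) + ((A ∪ B).card : ℚ) = ((box.card : ℕ) : ℚ) := by
    exact_mod_cast h1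
  have h2q : ((A ∪ B).card : ℚ) + ((A ∩ B).card : ℚ) = ((A.card : ℕ) : ℚ) + ((B.card : ℕ) : ℚ) := by
    exact_mod_cast h2'
  have hsq : (((box.filter P).filter C).card : ℚ)
      + (((box.filter P).filter (fun y => ¬ C y)).card : ℚ) = ((box.filter P).card : ℚ) := by
    exact_mod_cast hsplitcard
  have hiq : (((box.filter P).filter C).card : ℚ)
      ≤ (((box.filter P).filter (fun y => ¬ C y)).card : ℚ) := by
    exact_mod_cast hinj
  have hid : ((w2:ℚ)+1)^4 + ((w2:ℚ)-1)^4 - 2*(w2:ℚ)^4 = 12*(w2:ℚ)^2 + 2 := by ring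
  rw [hFY]
  push_cast at h1q h2q hsq hiq hboxq hAq hBq hABq ⊢
  linarith

-- ### Part 6: assembly

abbrev Sub (w1 w2 : ℤ) :=
  {S : Multiset (Fin 2 → ℤ) //
    Multiset.card S = 4 ∧ IsMultiWidth (msetHull S) ![(w1 : ℝ), (w2 : ℝ)]}

abbrev Rel (w1 w2 : ℤ) : Sub w1 w2 → Sub w1 w2 → Prop := fun S T => MsetEquiv S.1 T.1

lemma final (w1 w2 : ℤ) (h0 : 0 < w1) (h12 : w1 ≤ w2) :
    Finite (Quot (Rel w1 w2)) ∧ (Nat.card (Quot (Rel w1 w2)) : ℚ) ≤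
      ((w1 : ℚ) ^ 2 / 4 + (w1 : ℚ) + (if Even w1 then 1 else 3 / 4)) *
        (6 * (w2 : ℚ) ^ 2 + 1) := by
  classical
  have hw2 : 0 < w2 := lt_of_lt_of_le h0 h12
  by_cases hne : Nonempty (Sub w1 w2)
  · obtain ⟨S0⟩ := hne
    set FF : Finset ((ℤ × ℤ) × (Fin 4 → ℤ)) := FAB w1 ×ˢ FY w2 with hFF
    set f : {x // x ∈ FF} → Quot (Rel w1 w2) := fun x =>
      if hx : ∃ S : Sub w1 w2, MsetEquiv S.1 (nf w1 x.1.1.1 x.1.1.2 x.1.2)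
      then Quot.mk _ hx.choose else Quot.mk _ S0 with hf
    have hsurj : Function.Surjective f := by
      intro q
      refine Quot.inductionOn q ?_
      intro S
      have hG := good_of_multiwidth S.2.1 S.2.2
      obtain ⟨a, b, y, hcond, hequiv⟩ := normalize h0 h12 hG
      obtain ⟨ha0, hab, habw, hy, hy0, hyw, hcanon⟩ := hcond
      have hmemAB : (a, b) ∈ FAB w1 := by
        have h1 : a ∈ Finset.Icc 0 w1 := Finset.mem_Icc.mpr (by omega)
        have h2 : b ∈ Finset.Icc 0 w1 := Finset.mem_Icc.mpr (by omega)
        exact Finset.mem_filter.mpr ⟨Finset.mem_product.mpr ⟨h1, h2⟩, hab, habw⟩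
      have hmemY : y ∈ FY w2 :=
        Finset.mem_filter.mpr ⟨Fintype.mem_piFinset.mpr
          (fun i => Finset.mem_Icc.mpr (hy i)), hy0, hyw, hcanon⟩
      have hmem : ((a, b), y) ∈ FF := by
        rw [hFF]
        exact Finset.mem_product.mpr ⟨hmemAB, hmemY⟩
      refine ⟨⟨((a, b), y), hmem⟩, ?_⟩
      have hex : ∃ S' : Sub w1 w2, MsetEquiv S'.1 (nf w1 a b y) := ⟨S, hequiv⟩
      show (if hx : ∃ S' : Sub w1 w2, MsetEquiv S'.1 (nf w1 a b y)
        then Quot.mk _ hx.choose else Quot.mk _ S0) = Quot.mk _ S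
      rw [dif_pos hex]
      exact Quot.sound (msetEquiv_trans hex.choose_spec (msetEquiv_symm hequiv))
    have hfin : Finite (Quot (Rel w1 w2)) := Finite.of_surjective f hsurj
    refine ⟨hfin, ?_⟩
    have hcard : Nat.card (Quot (Rel w1 w2)) ≤ Nat.card {x // x ∈ FF} :=
      Nat.card_le_card_of_surjective f hsurj
    have hcard2 : Nat.card {x // x ∈ FF} = FF.card := Nat.card_eq_finsetCard FF
    calc (Nat.card (Quot (Rel w1 w2)) : ℚ) ≤ (FF.card : ℚ) := by
          rw [← hcard2]; exact_mod_cast hcard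
      _ = ((FAB w1).card : ℚ) * ((FY w2).card : ℚ) := by
          rw [hFF, Finset.card_product]; push_cast; ring
      _ ≤ ((w1 : ℚ) ^ 2 / 4 + (w1 : ℚ) + (if Even w1 then 1 else 3 / 4)) *
            (6 * (w2 : ℚ) ^ 2 + 1) := by
          rw [← card_FAB w1 h0]
          exact mul_le_mul_of_nonneg_left (card_FY w2 hw2) (Nat.cast_nonneg _)
  · have hempty : IsEmpty (Sub w1 w2) := not_nonempty_iff.mp hne
    have hQempty : IsEmpty (Quot (Rel w1 w2)) :=
      ⟨fun q => Quot.ind (β := fun _ => False) (fun S => hempty.elim S) q⟩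
    haveI := hQempty
    haveI : Fintype (Quot (Rel w1 w2)) := @Fintype.ofIsEmpty _ hQempty
    refine ⟨Finite.of_fintype _, ?_⟩
    rw [Nat.card_of_isEmpty]
    have hw1q : (1:ℚ) ≤ (w1:ℚ) := by exact_mod_cast h0
    have hw2q : (1:ℚ) ≤ (w2:ℚ) := by exact_mod_cast hw2
    push_cast
    split_ifs <;> nlinarith

end FourPt

/-- For `0 < w₁ ≤ w₂`, the number of affine equivalence classes of four-point multisets
in `ℤ²` with multi-width `(w₁, w₂)` is finite and at most
`(w₁²/4 + w₁ + c)(6w₂² + 1)` where `c = 1` for `w₁` even and `c = 3/4` for `w₁` odd. -/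
theorem four_point_sets_bound (w1 w2 : ℤ) (h0 : 0 < w1) (h12 : w1 ≤ w2) :
    Finite (Quot fun S T : {S : Multiset (Fin 2 → ℤ) //
        Multiset.card S = 4 ∧ IsMultiWidth (msetHull S) ![(w1 : ℝ), (w2 : ℝ)]} =>
          MsetEquiv S.1 T.1) ∧
    (Nat.card (Quot fun S T : {S : Multiset (Fin 2 → ℤ) //
        Multiset.card S = 4 ∧ IsMultiWidth (msetHull S) ![(w1 : ℝ), (w2 : ℝ)]} =>
          MsetEquiv S.1 T.1) : ℚ) ≤
      ((w1 : ℚ) ^ 2 / 4 + (w1 : ℚ) + (if Even w1 then 1 else 3 / 4)) *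
        (6 * (w2 : ℚ) ^ 2 + 1) := by
  exact FourPt.final w1 w2 h0 h12
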